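/- Let A be a real N×N matrix partitioned into n² blocks A_{ij} ∈ ℝ^{k_i×k_j}. Every eigenvalue λ of A satisfies, for at least one index i, the block Gershgorin inequality: the smallest singular value of (λI − A_{ii}) is at most Σ_{j≠i} ‖A_{ij}‖₂, where ‖·‖₂ is the spectral norm. -/

import Mathlib

open Matrix

/-- The spectral (ℓ²→ℓ²  operator) norm of a complex matrix. -/
noncomputable def specNorm {m n : Type*} [Fintype m] [Fintype n] [DecidableEq n]
    (B : Matrix m n ℂ) : ℝ :=
  ‖LinearMap.toContinuousLinearMap (Matrix.toEuclideanLin B)‖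

/-- The smallest singular value of a square complex matrix. -/
noncomputable def minSingularValue {m : Type*} [Fintype m] [DecidableEq m]
    (B : Matrix m m ℂ) : ℝ :=
  ⨅ x : {x : EuclideanSpace ℂ m // ‖x‖ = 1}, ‖Matrix.toEuclideanLin B x.1‖

lemma specNorm_bound {m n : Type*} [Fintype m] [Fintype n] [DecidableEq n]
    (B : Matrix m n ℂ) (x : EuclideanSpace ℂ n) :
    ‖Matrix.toEuclideanLin B x‖ ≤ specNorm B * ‖x‖ := by
  simpa [specNorm] using
    (LinearMap.toContinuousLinearMap (Matrix.toEuclideanLin B)).le_opNorm x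

lemma minSingularValue_le_of_unit {m : Type*} [Fintype m] [DecidableEq m]
    (B : Matrix m m ℂ) (x : EuclideanSpace ℂ m) (hx : ‖x‖ = 1) :
    minSingularValue B ≤ ‖Matrix.toEuclideanLin B x‖ :=
  ciInf_le ⟨0, by rintro r ⟨y, rfl⟩; exact norm_nonneg _⟩
    (⟨x, hx⟩ : {x : EuclideanSpace ℂ m // ‖x‖ = 1})

theorem block_gershgorin {nb : ℕ} (k : Fin nb → ℕ)
    (A : Matrix ((i : Fin nb) × Fin (k i)) ((i : Fin nb) × Fin (k i)) ℝ)
    (lam : ℂ) (hlam : lam ∈ spectrum ℂ (A.map (algebraMap ℝ ℂ))) :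
    ∃ i : Fin nb,
      minSingularValue
        (lam • (1 : Matrix (Fin (k i)) (Fin (k i)) ℂ)
          - Matrix.of (fun x y => algebraMap ℝ ℂ (A ⟨i, x⟩ ⟨i, y⟩)))
      ≤ ∑ j ∈ Finset.univ.erase i,
          specNorm (Matrix.of (fun (x : Fin (k i)) (y : Fin (k j)) =>
            algebraMap ℝ ℂ (A ⟨i, x⟩ ⟨j, y⟩))) := by
  classical
  set Ac := A.map (algebraMap ℝ ℂ) with hAc
  have hlam' : lam ∈ spectrum ℂ (Matrix.toLinAlgEquiv' Ac) := by
    rwa [AlgEquiv.spectrum_eq]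
  have heig : Module.End.HasEigenvalue (Matrix.toLinAlgEquiv' Ac) lam :=
    Module.End.hasEigenvalue_iff_mem_spectrum.mpr hlam'
  obtain ⟨v, hv⟩ := heig.exists_hasEigenvector
  have hmv : Ac.mulVec v = lam • v := by
    have := hv.apply_eq_smul
    simpa [Matrix.toLinAlgEquiv'_apply, Matrix.toLin'_apply] using this
  -- block vectors
  let V : ∀ i : Fin nb, EuclideanSpace ℂ (Fin (k i)) := fun i => WithLp.toLp 2 (fun x => v ⟨i, x⟩)
  obtain ⟨s, hs⟩ : ∃ s, v s ≠ 0 := Function.ne_iff.mp hv.2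
  obtain ⟨i, -, hi⟩ := Finset.exists_max_image Finset.univ (fun j => ‖V j‖)
    ⟨s.1, Finset.mem_univ _⟩
  have hVs : V s.1 ≠ 0 := fun h => hs (by simpa [V] using congrArg (fun w : EuclideanSpace ℂ (Fin (k s.1)) => w s.2) h)
  have hpos : 0 < ‖V i‖ := lt_of_lt_of_le (norm_pos_iff.mpr hVs) (hi s.1 (Finset.mem_univ _))
  refine ⟨i, ?_⟩
  set Bi : Matrix (Fin (k i)) (Fin (k i)) ℂ :=
    lam • (1 : Matrix (Fin (k i)) (Fin (k i)) ℂ)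
      - Matrix.of (fun x y => algebraMap ℝ ℂ (A ⟨i, x⟩ ⟨i, y⟩)) with hBi
  set M : ∀ j : Fin nb, Matrix (Fin (k i)) (Fin (k j)) ℂ :=
    fun j => Matrix.of (fun x y => algebraMap ℝ ℂ (A ⟨i, x⟩ ⟨j, y⟩)) with hM
  have key : Matrix.toEuclideanLin Bi (V i)
      = ∑ j ∈ Finset.univ.erase i, Matrix.toEuclideanLin (M j) (V j) := by
    ext x
    have h1 : ((∑ j ∈ Finset.univ.erase i,
        Matrix.toEuclideanLin (M j) (V j)) : EuclideanSpace ℂ (Fin (k i))) x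
        = ∑ j ∈ Finset.univ.erase i, (M j).mulVec (V j) x :=
      by rw [WithLp.ofLp_sum, Finset.sum_apply]; rfl
    rw [h1]
    have h2 := congrFun hmv ⟨i, x⟩
    simp only [Matrix.mulVec, dotProduct, Pi.smul_apply, smul_eq_mul] at h2 ⊢
    rw [← Finset.univ_sigma_univ, Finset.sum_sigma] at h2
    rw [← Finset.add_sum_erase Finset.univ _ (Finset.mem_univ i)] at h2
    have : Matrix.toEuclideanLin Bi (V i) x = ∑ y, Bi x y * v ⟨i, y⟩ := rfl
    rw [this]
    have hBexp : ∀ y, Bi x y = lam * (if x = y then 1 else 0)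
        - algebraMap ℝ ℂ (A ⟨i, x⟩ ⟨i, y⟩) := by
      intro y
      simp [hBi, Matrix.one_apply, Matrix.smul_apply, Matrix.sub_apply]
    simp only [hBexp, sub_mul, mul_assoc]
    rw [Finset.sum_sub_distrib]
    simp only [ite_mul, one_mul, zero_mul, mul_ite, mul_zero, Finset.sum_ite_eq,
      Finset.mem_univ, if_true]
    have h3 : ∑ y, Ac ⟨i, x⟩ ⟨i, y⟩ * v ⟨i, y⟩
        = ∑ y, algebraMap ℝ ℂ (A ⟨i, x⟩ ⟨i, y⟩) * v ⟨i, y⟩ := rfl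
    rw [h3] at h2
    have h6 : (∑ x_1 ∈ Finset.univ.erase i, ∑ x_2 : Fin (k x_1), M x_1 x x_2 * V x_1 x_2)
        = ∑ x_1 ∈ Finset.univ.erase i, ∑ s : Fin (k x_1), Ac ⟨i, x⟩ ⟨x_1, s⟩ * v ⟨x_1, s⟩ := rfl
    rw [h6]
    linear_combination -h2
  -- now the norm estimates
  have hnn : ∀ j, 0 ≤ specNorm (M j) := fun j => norm_nonneg _
  have hnorm : ‖Matrix.toEuclideanLin Bi (V i)‖
      ≤ (∑ j ∈ Finset.univ.erase i, specNorm (M j)) * ‖V i‖ := by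
    rw [key]
    calc ‖∑ j ∈ Finset.univ.erase i, Matrix.toEuclideanLin (M j) (V j)‖
        ≤ ∑ j ∈ Finset.univ.erase i, ‖Matrix.toEuclideanLin (M j) (V j)‖ :=
          norm_sum_le _ _
      _ ≤ ∑ j ∈ Finset.univ.erase i, specNorm (M j) * ‖V j‖ :=
          Finset.sum_le_sum fun j _ => specNorm_bound _ _
      _ ≤ ∑ j ∈ Finset.univ.erase i, specNorm (M j) * ‖V i‖ :=
          Finset.sum_le_sum fun j _ =>
            mul_le_mul_of_nonneg_left (hi j (Finset.mem_univ _)) (hnn j)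
      _ = (∑ j ∈ Finset.univ.erase i, specNorm (M j)) * ‖V i‖ :=
          (Finset.sum_mul _ _ _).symm
  set u : EuclideanSpace ℂ (Fin (k i)) := (‖V i‖ : ℂ)⁻¹ • V i with hu
  have hune : (‖V i‖ : ℂ) ≠ 0 := by
    exact_mod_cast ne_of_gt hpos
  have hu1 : ‖u‖ = 1 := by
    rw [hu, norm_smul]
    simp [norm_inv, Complex.norm_real, abs_of_pos hpos]
    field_simp
  have h4 : minSingularValue Bi ≤ ‖Matrix.toEuclideanLin Bi u‖ :=
    minSingularValue_le_of_unit _ _ hu1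
  rw [hu, _root_.map_smul, norm_smul] at h4
  have h5 : ‖(‖V i‖ : ℂ)⁻¹‖ = ‖V i‖⁻¹ := by
    simp [norm_inv, Complex.norm_real, abs_of_pos hpos]
  rw [h5] at h4
  calc minSingularValue Bi ≤ ‖V i‖⁻¹ * ‖Matrix.toEuclideanLin Bi (V i)‖ := h4
    _ ≤ ‖V i‖⁻¹ * ((∑ j ∈ Finset.univ.erase i, specNorm (M j)) * ‖V i‖) :=
        mul_le_mul_of_nonneg_left hnorm (by positivity)
    _ = ∑ j ∈ Finset.univ.erase i, specNorm (M j) := by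
        field_simp
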